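/- Let K ≥ 1, N ≥ 1 and s be integers with 1 ≤ s ≤ K, and define, for integers 1 ≤ j ≤ K, L_coded(j, s) = ∑_{ℓ = max(j,s)}^{min(j+s, K)} [C(K−j, ℓ−j)·C(j, ℓ−s)/C(K,s)]·(ℓ−j)/(ℓ−1), where C(·,·) is the binomial coefficient. Let r be a real number with 1 ≤ r ≤ K, write r₁ = ⌊r⌋ and r₂ = ⌈r⌉, and let α ∈ [0,1] satisfy r = α·r₁ + (1−α)·r₂. Let a_1, …, a_K be nonnegative real numbers satisfying ∑_{j=1}^K a_j = N and ∑_{j=1}^K j·a_j = r·N. Then ∑_{j=1}^K (a_j/N)·L_coded(j, s) ≥ α·L_coded(r₁, s) + (1−α)·L_coded(r₂, s). -/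

import Mathlib

open Finset

/-- The communication load `L_coded(j,s)` of the CDC scheme in the cascaded framework
(converse form): `∑_{ℓ=max(j,s)}^{min(j+s,K)} [C(K-j,ℓ-j) C(j,ℓ-s)/C(K,s)] (ℓ-j)/(ℓ-1)`. -/
noncomputable def LcodedConv (K s j : ℕ) : ℝ :=
  ∑ ℓ ∈ Finset.Icc (max j s) (min (j + s) K),
    ((Nat.choose (K - j) (ℓ - j) : ℝ) * (Nat.choose j (ℓ - s) : ℝ) /
        (Nat.choose K s : ℝ)) *
      (((ℓ : ℝ) - j) / ((ℓ : ℝ) - 1))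

open Polynomial


lemma term_coeff (x : ℝ) (a k m : ℕ) :
    ((C x * X)^k * (1:ℝ[X])^(a-k) * (a.choose k : ℝ[X])).coeff m
      = (if k = m then (a.choose k : ℝ) * x^k else 0) := by
  rw [one_pow, mul_one, ← C_eq_natCast, coeff_mul_C, mul_pow, ← C_pow, coeff_C_mul, coeff_X_pow]
  rcases eq_or_ne k m with h | h
  · simp [h]; ring
  · simp [h, Ne.symm h]

lemma coeff_one_add_C_mul_X_pow (x : ℝ) (a m : ℕ) :
    (((1 : ℝ[X]) + C x * X)^a).coeff m = (a.choose m : ℝ) * x^m := by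
  rw [add_comm, add_pow, finset_sum_coeff]
  simp only [term_coeff]
  rw [Finset.sum_ite_eq' (Finset.range (a+1)) m]
  rcases le_or_gt m a with h | h
  · simp [Nat.lt_succ_of_le h]
  · simp [Nat.choose_eq_zero_of_lt h]

noncomputable def Phi (s a b : ℕ) (x : ℝ) : ℝ :=
  ∑ i ∈ Finset.range s, (Nat.choose a i : ℝ) * (Nat.choose b (s-1-i) : ℝ) * x^i

lemma Phi_eq_coeff (s a b : ℕ) (hs : 1 ≤ s) (x : ℝ) :
    Phi s a b x = (((1 : ℝ[X]) + C x * X)^a * ((1 : ℝ[X]) + X)^b).coeff (s-1) := by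
  rw [coeff_mul, Finset.Nat.sum_antidiagonal_eq_sum_range_succ_mk]
  rw [show (s-1).succ = s from by omega]
  unfold Phi
  refine Finset.sum_congr rfl fun i hi => ?_
  rw [coeff_one_add_C_mul_X_pow, Polynomial.coeff_one_add_X_pow]
  ring

/-- nonneg coefficients are preserved by products -/
lemma coeff_mul_nonneg {P Q : ℝ[X]} (hP : ∀ m, 0 ≤ P.coeff m) (hQ : ∀ m, 0 ≤ Q.coeff m) :
    ∀ m, 0 ≤ (P * Q).coeff m := by
  intro m
  rw [coeff_mul]
  exact Finset.sum_nonneg fun p _ => mul_nonneg (hP p.1) (hQ p.2)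

lemma coeff_base_nonneg {x : ℝ} (hx : 0 ≤ x) (a : ℕ) :
    ∀ m, 0 ≤ ((((1 : ℝ[X]) + C x * X))^a).coeff m := by
  intro m
  rw [coeff_one_add_C_mul_X_pow]
  positivity

lemma coeff_baseX_nonneg (b : ℕ) : ∀ m, 0 ≤ (((1 : ℝ[X]) + X)^b).coeff m := by
  intro m; rw [Polynomial.coeff_one_add_X_pow]; positivity

lemma coeff_lin_nonneg {c₀ c₁ : ℝ} (h0 : 0 ≤ c₀) (h1 : 0 ≤ c₁) :
    ∀ m, 0 ≤ ((C c₀ + C c₁ * X : ℝ[X])).coeff m := by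
  intro m
  rw [coeff_add, coeff_C, coeff_C_mul, coeff_X]
  rcases eq_or_ne m 0 with h | h <;> rcases eq_or_ne (1:ℕ) m with h' | h' <;>
    simp [h, h'] <;> first | positivity | (try omega)
  all_goals positivity


lemma main_identity (x : ℝ) (d e : ℕ) :
    C ((d:ℝ)+3) * ((1:ℝ[X]) + C x * X)^(d+2) * ((1:ℝ[X]) + X)^e
      + C (((d:ℝ)+1) * x^2) * ((1:ℝ[X]) + C x * X)^d * ((1:ℝ[X]) + X)^(e+2)
      - C (2*((d:ℝ)+2)*x) * ((1:ℝ[X]) + C x * X)^(d+1) * ((1:ℝ[X]) + X)^(e+1)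
    = C (1-x) * (((1:ℝ[X]) + C x * X)^d * ((1:ℝ[X]) + X)^e
        * (C (((d:ℝ)+2)*(1-x)+1+x) + C (2*x) * X)) := by
  have h2 : (d+2) = d + 1 + 1 := by omega
  rw [h2]
  simp only [pow_succ, map_add, map_mul, map_sub, map_one, map_ofNat, map_pow]
  ring

noncomputable def Gfun (K s j : ℕ) (x : ℝ) : ℝ :=
  ((K:ℝ) - j) * x^(j-1) * Phi s (K-j-1) j x

lemma pointwise (K s j : ℕ) (hs : 1 ≤ s) (hj : 2 ≤ j) (hjK : j + 1 ≤ K) (x : ℝ)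
    (hx0 : 0 ≤ x) (hx1 : x ≤ 1) :
    0 ≤ Gfun K s (j-1) x + Gfun K s (j+1) x - 2 * Gfun K s j x := by
  obtain ⟨m, rfl⟩ : ∃ m, j = m + 2 := ⟨j - 2, by omega⟩
  unfold Gfun
  rcases eq_or_lt_of_le hjK with hK | hK
  · -- K = m + 3
    have hKv : K = m + 3 := by omega
    subst hKv
    simp only [show m+2-1 = m+1 from by omega, Nat.add_sub_cancel,
      show m+3-(m+1)-1 = 1 from by omega, show m+3-(m+2)-1 = 0 from by omega,
      show m+3-(m+2+1)-1 = 0 from by omega, show m+1-1 = m from by omega]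
    have hφ1 : Phi s 1 (m+1) x = (((1:ℝ[X]) + C x * X) * ((1:ℝ[X]) + X)^(m+1)).coeff (s-1) := by
      simpa [pow_one] using Phi_eq_coeff s 1 (m+1) hs x
    have hφ2 : Phi s 0 (m+2) x = ((((1:ℝ[X]) + X))^(m+2)).coeff (s-1) := by
      simpa using Phi_eq_coeff s 0 (m+2) hs x
    rw [hφ1, hφ2]
    have hid : C 2 * (((1:ℝ[X]) + C x * X) * ((1:ℝ[X]) + X)^(m+1)) - C (2*x) * ((1:ℝ[X]) + X)^(m+2)
        = C (2*(1-x)) * ((1:ℝ[X]) + X)^(m+1) := by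
      simp only [pow_succ, map_mul, map_sub, map_one, map_ofNat]
      ring
    have hc := congrArg (fun p => p.coeff (s-1)) hid
    simp only [coeff_sub, coeff_C_mul] at hc
    have hnn : 0 ≤ ((((1:ℝ[X]) + X))^(m+1)).coeff (s-1) := coeff_baseX_nonneg (m+1) (s-1)
    push_cast
    have key : ((m:ℝ) + 3 - ((m:ℝ) + 1)) * x ^ m * (((1:ℝ[X]) + C x * X) * ((1:ℝ[X]) + X) ^ (m + 1)).coeff (s - 1) +
          ((m:ℝ) + 3 - ((m:ℝ) + 2 + 1)) * x ^ (m + 2) * Phi s 0 (m + 2 + 1) x -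
        2 * (((m:ℝ) + 3 - ((m:ℝ) + 2)) * x ^ (m + 1) * (((1:ℝ[X]) + X) ^ (m + 2)).coeff (s - 1))
        = x^m * (2*(1-x) * ((((1:ℝ[X]) + X))^(m+1)).coeff (s-1)) := by
      linear_combination (x^m : ℝ) * hc
    rw [key]
    have h1x := sub_nonneg.2 hx1
    positivity
  · -- K ≥ m + 4
    obtain ⟨d, hKv⟩ : ∃ d, K = m + d + 4 := ⟨K - m - 4, by omega⟩
    subst hKv
    simp only [show m+2-1 = m+1 from by omega, Nat.add_sub_cancel,
      show m+d+4-(m+1)-1 = d+2 from by omega, show m+d+4-(m+2)-1 = d+1 from by omega,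
      show m+d+4-(m+2+1)-1 = d from by omega, show m+1-1 = m from by omega]
    have hφ1 := Phi_eq_coeff s (d+2) (m+1) hs x
    have hφ2 := Phi_eq_coeff s d (m+2+1) hs x
    have hφ3 := Phi_eq_coeff s (d+1) (m+2) hs x
    rw [hφ1, hφ2, hφ3]
    have hid := main_identity x d (m+1)
    have hc := congrArg (fun p => p.coeff (s-1)) hid
    simp only [mul_assoc, coeff_sub, coeff_add, coeff_C_mul] at hc
    have hcR : 0 ≤ (((1:ℝ[X]) + C x * X) ^ d * (((1:ℝ[X]) + X) ^ (m+1) * (C (((d:ℝ)+2)*(1-x)+1+x) + C (2*x) * X))).coeff (s-1) := by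
      rw [← mul_assoc]
      apply coeff_mul_nonneg
      · exact coeff_mul_nonneg (coeff_base_nonneg hx0 d) (coeff_baseX_nonneg (m+1))
      · apply coeff_lin_nonneg
        · nlinarith
        · linarith
    push_cast
    have key : ((m:ℝ) + (d:ℝ) + 4 - ((m:ℝ) + 1)) * x ^ m * (((1:ℝ[X]) + C x * X) ^ (d + 2) * ((1:ℝ[X]) + X) ^ (m + 1)).coeff (s - 1) +
          ((m:ℝ) + (d:ℝ) + 4 - ((m:ℝ) + 2 + 1)) * x ^ (m + 2) * (((1:ℝ[X]) + C x * X) ^ d * ((1:ℝ[X]) + X) ^ (m + 2 + 1)).coeff (s - 1) -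
        2 * (((m:ℝ) + (d:ℝ) + 4 - ((m:ℝ) + 2)) * x ^ (m + 1) * (((1:ℝ[X]) + C x * X) ^ (d + 1) * ((1:ℝ[X]) + X) ^ (m + 2)).coeff (s - 1))
        = x^m * ((1-x) * (((1:ℝ[X]) + C x * X) ^ d * (((1:ℝ[X]) + X) ^ (m+1) * (C (((d:ℝ)+2)*(1-x)+1+x) + C (2*x) * X))).coeff (s-1)) := by
      linear_combination (x^m : ℝ) * hc
    rw [key]
    have h1x := sub_nonneg.2 hx1
    positivity

noncomputable def Tsum (K s j : ℕ) : ℝ :=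
  ∑ i ∈ Finset.range s,
    ((K:ℝ) - j) * (Nat.choose (K-j-1) i : ℝ) * (Nat.choose j (s-1-i) : ℝ) / ((j:ℝ) + i)

lemma continuous_Gfun (K s j : ℕ) : Continuous (Gfun K s j) := by
  unfold Gfun Phi
  exact (continuous_const.mul (continuous_pow _)).mul
    (continuous_finset_sum _ fun i _ => (continuous_const.mul continuous_const).mul (continuous_pow _))

lemma Tsum_eq_integral (K s j : ℕ) (hj : 1 ≤ j) :
    Tsum K s j = ∫ x in (0:ℝ)..1, Gfun K s j x := by
  have hrep : ∀ x : ℝ, Gfun K s j x = ∑ i ∈ Finset.range s,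
      (((K:ℝ) - j) * (Nat.choose (K-j-1) i : ℝ) * (Nat.choose j (s-1-i) : ℝ)) * x^(j-1+i) := by
    intro x
    unfold Gfun Phi
    rw [Finset.mul_sum]
    refine Finset.sum_congr rfl fun i _ => ?_
    rw [pow_add]; ring
  simp only [hrep]
  rw [intervalIntegral.integral_finset_sum]
  · refine Finset.sum_congr rfl fun i _ => ?_
    rw [intervalIntegral.integral_const_mul, integral_pow]
    have hc : ((j - 1 + i : ℕ) : ℝ) + 1 = (j:ℝ) + i := by
      push_cast [Nat.cast_sub hj]
      ring
    rw [hc]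
    rw [div_eq_mul_inv, div_eq_mul_inv]
    norm_num
  · intro i _
    exact (continuous_const.mul (continuous_pow _)).intervalIntegrable 0 1

lemma Tsum_convex (K s j : ℕ) (hs : 1 ≤ s) (hj : 2 ≤ j) (hjK : j + 1 ≤ K) :
    0 ≤ Tsum K s (j-1) + Tsum K s (j+1) - 2 * Tsum K s j := by
  rw [Tsum_eq_integral K s (j-1) (by omega), Tsum_eq_integral K s (j+1) (by omega),
    Tsum_eq_integral K s j (by omega)]
  have hint : ∀ j' : ℕ, IntervalIntegrable (Gfun K s j') MeasureTheory.volume 0 1 :=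
    fun j' => (continuous_Gfun K s j').intervalIntegrable 0 1
  rw [← intervalIntegral.integral_add (hint _) (hint _), show (2:ℝ) * ∫ x in (0:ℝ)..1, Gfun K s j x
      = ∫ x in (0:ℝ)..1, 2 * Gfun K s j x from (intervalIntegral.integral_const_mul 2 _).symm,
    ← intervalIntegral.integral_sub ((hint _).add (hint _)) ((hint _).const_mul 2)]
  apply intervalIntegral.integral_nonneg (by norm_num)
  intro u hu
  exact pointwise K s j hs hj hjK u hu.1 hu.2

lemma Lcoded_eq (K s j : ℕ) (hs : 1 ≤ s) (hsK : s ≤ K) (hj : 1 ≤ j) (hjK : j ≤ K) :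
    LcodedConv K s j = Tsum K s j / (Nat.choose K s : ℝ) := by
  rcases eq_or_lt_of_le hjK with rfl | hjK'
  · have h1 : LcodedConv j s j = 0 := by
      unfold LcodedConv
      rw [max_eq_left hsK, min_eq_right (by omega), Finset.Icc_self, Finset.sum_singleton]
      simp
    have h2 : Tsum j s j = 0 := by
      unfold Tsum; apply Finset.sum_eq_zero; intro i _; simp
    rw [h1, h2, zero_div]
  · set f : ℕ → ℝ := fun ℓ =>
      ((Nat.choose (K - j) (ℓ - j) : ℝ) * (Nat.choose j (ℓ - s) : ℝ) / (Nat.choose K s : ℝ)) *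
        (((ℓ : ℝ) - j) / ((ℓ : ℝ) - 1)) with hf
    set g : ℕ → ℝ := fun ℓ =>
      ((K:ℝ) - j) * (Nat.choose (K-j-1) (ℓ-j-1) : ℝ) * (Nat.choose j (s-1-(ℓ-j-1)) : ℝ) /
        ((j:ℝ) + (ℓ-j-1 : ℕ)) / (Nat.choose K s : ℝ) with hg
    have hA : LcodedConv K s j = ∑ ℓ ∈ Finset.Icc (max j s) (min (j+s) K), f ℓ := rfl
    have hT : Tsum K s j / (Nat.choose K s : ℝ)
        = ∑ i ∈ Finset.range s,
            ((K:ℝ) - j) * (Nat.choose (K-j-1) i : ℝ) * (Nat.choose j (s-1-i) : ℝ) /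
              ((j:ℝ) + i) / (Nat.choose K s : ℝ) := by
      rw [Tsum, Finset.sum_div]
    -- step 1 : domain change
    have step1 : ∑ ℓ ∈ Finset.Icc (max j s) (min (j+s) K), f ℓ
        = ∑ ℓ ∈ Finset.Icc (max (j+1) s) (j+s), f ℓ := by
      have hz1 : ∀ ℓ ∈ Finset.Icc (max j s) (min (j+s) K) ∪ Finset.Icc (max (j+1) s) (j+s),
          ℓ ∉ Finset.Icc (max j s) (min (j+s) K) → f ℓ = 0 := by
        intro ℓ hℓ hℓ'
        simp only [Finset.mem_union, Finset.mem_Icc, max_le_iff, le_min_iff, not_and_or, not_le] at hℓ hℓ'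
        have hK : K < ℓ := by omega
        have : Nat.choose (K-j) (ℓ-j) = 0 := Nat.choose_eq_zero_of_lt (by omega)
        simp [hf, this]
      have hz2 : ∀ ℓ ∈ Finset.Icc (max j s) (min (j+s) K) ∪ Finset.Icc (max (j+1) s) (j+s),
          ℓ ∉ Finset.Icc (max (j+1) s) (j+s) → f ℓ = 0 := by
        intro ℓ hℓ hℓ'
        simp only [Finset.mem_union, Finset.mem_Icc, max_le_iff, le_min_iff, not_and_or, not_le] at hℓ hℓ'
        have : ℓ = j := by omega
        subst this
        simp [hf]
      rw [Finset.sum_subset Finset.subset_union_left hz1,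
        Finset.sum_subset Finset.subset_union_right hz2]
    -- termwise equality on the good region
    have hterm : ∀ ℓ, j+1 ≤ ℓ → s ≤ ℓ → ℓ ≤ j + s → f ℓ = g ℓ := by
      intro ℓ h1 h2 h3
      obtain ⟨i, rfl⟩ : ∃ i, ℓ = j + 1 + i := ⟨ℓ - j - 1, by omega⟩
      have e1 : j + 1 + i - j = i + 1 := by omega
      have e2 : j + 1 + i - j - 1 = i := by omega
      have e3 : Nat.choose j (j+1+i-s) = Nat.choose j (s-1-i) := by
        rw [show s-1-i = j - (j+1+i-s) from by omega]
        exact (Nat.choose_symm (by omega)).symm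
      have e4 : (K - j) * Nat.choose (K-j-1) i = Nat.choose (K-j) (i+1) * (i+1) := by
        have h := Nat.add_one_mul_choose_eq (K-j-1) i
        rw [show K-j-1+1 = K - j from by omega] at h
        simpa [Nat.succ_eq_add_one] using h
      simp only [hf, hg, e1, e2, e3, Nat.add_sub_cancel]
      have c1 : ((j:ℝ) + 1 + i) - j = (i:ℝ) + 1 := by push_cast; ring
      have c2 : (((j+1+i : ℕ)):ℝ) = (j:ℝ) + 1 + i := by push_cast; ring
      rw [c2]
      have c3 : ((j:ℝ) + 1 + i) - 1 = (j:ℝ) + i := by ring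
      rw [c1, c3]
      have c4 : ((K:ℝ) - (j:ℝ)) * (Nat.choose (K-j-1) i : ℝ)
          = (Nat.choose (K-j) (i+1) : ℝ) * ((i:ℝ)+1) := by
        have h := congrArg (Nat.cast : ℕ → ℝ) e4
        push_cast [Nat.cast_sub (le_of_lt hjK')] at h
        exact h
      have hCK : (0:ℝ) < (Nat.choose K s : ℝ) := by exact_mod_cast Nat.choose_pos hsK
      have hj1 : (1:ℝ) ≤ (j:ℝ) := by exact_mod_cast hj
      have hden : (0:ℝ) < (j:ℝ) + i := by positivity
      rw [div_mul_div_comm, div_div, div_eq_div_iff (by positivity) (by positivity)]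
      linear_combination (-((Nat.choose j (s-1-i) : ℝ) * (((j:ℝ)+i) * (Nat.choose K s : ℝ)))) * c4
    -- step 2
    have step2 : ∑ ℓ ∈ Finset.Icc (max (j+1) s) (j+s), f ℓ
        = ∑ ℓ ∈ Finset.Icc (j+1) (j+s), g ℓ := by
      rw [Finset.sum_congr rfl (fun ℓ hℓ => by
        simp only [Finset.mem_Icc, max_le_iff] at hℓ
        exact hterm ℓ hℓ.1.1 hℓ.1.2 hℓ.2)]
      apply Finset.sum_subset
      · intro ℓ hℓ
        simp only [Finset.mem_Icc, max_le_iff] at hℓ ⊢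
        omega
      · intro ℓ hℓ hℓ'
        simp only [Finset.mem_Icc, max_le_iff, not_and_or, not_le] at hℓ hℓ'
        have hls : ℓ < s := by omega
        have : Nat.choose j (s-1-(ℓ-j-1)) = 0 := Nat.choose_eq_zero_of_lt (by omega)
        simp [hg, this]
    -- step 3 : reindex
    have step3 : ∑ ℓ ∈ Finset.Icc (j+1) (j+s), g ℓ
        = ∑ i ∈ Finset.range s,
            ((K:ℝ) - j) * (Nat.choose (K-j-1) i : ℝ) * (Nat.choose j (s-1-i) : ℝ) /
              ((j:ℝ) + i) / (Nat.choose K s : ℝ) := by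
      refine Finset.sum_nbij' (fun ℓ => ℓ - j - 1) (fun i => j + 1 + i) ?_ ?_ ?_ ?_ ?_
      · intro ℓ hℓ; simp only [Finset.mem_Icc] at hℓ; simp only [Finset.mem_range]; omega
      · intro i hi; simp only [Finset.mem_range] at hi; simp only [Finset.mem_Icc]; omega
      · intro ℓ hℓ; simp only [Finset.mem_Icc] at hℓ
        show j + 1 + (ℓ - j - 1) = ℓ; omega
      · intro i hi; simp only [Finset.mem_range] at hi
        show j + 1 + i - j - 1 = i; omega
      · intro ℓ hℓ
        rfl
    rw [hA, step1, step2, step3, hT]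

section Envelope
variable (g : ℕ → ℝ) (K : ℕ)

lemma diff_mono (hconv : ∀ v, 1 ≤ v → v + 2 ≤ K → 0 ≤ g v + g (v+2) - 2 * g (v+1)) :
    ∀ u v : ℕ, 1 ≤ u → u ≤ v → v + 1 ≤ K → g (u+1) - g u ≤ g (v+1) - g v := by
  intro u v hu huv
  induction v, huv using Nat.le_induction with
  | base => intro _; exact le_refl _
  | succ v hv ih =>
    intro hvK
    have h1 := hconv v (by omega) (by omega)
    have h2 := ih (by omega)
    have : v + 1 + 1 = v + 2 := by omega
    rw [this]
    linarith

lemma line_bound (hconv : ∀ v, 1 ≤ v → v + 2 ≤ K → 0 ≤ g v + g (v+2) - 2 * g (v+1))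
    (t : ℕ) (ht1 : 1 ≤ t) (htK : t ≤ K) (q : ℝ)
    (hq : q = g (min t (K-1) + 1) - g (min t (K-1))) :
    ∀ j, 1 ≤ j → j ≤ K → g t + ((j:ℝ) - (t:ℝ)) * q ≤ g j := by
  have hup : ∀ m, t + m ≤ K → g t + (m:ℝ) * q ≤ g (t + m) := by
    intro m
    induction m with
    | zero => intro _; simp
    | succ m ih =>
      intro hm
      have h1 := ih (by omega)
      have hK2 : 2 ≤ K := by omega
      have htt : min t (K-1) ≤ t + m := by omega
      have h2 : q ≤ g (t+m+1) - g (t+m) := by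
        rw [hq]
        exact diff_mono g K hconv _ _ (by omega) htt (by omega)
      have : t + (m+1) = (t + m) + 1 := by omega
      rw [this]
      push_cast
      linarith
  have hdown : ∀ m u, u + m = t → 1 ≤ u → g t - (m:ℝ) * q ≤ g u := by
    intro m
    induction m with
    | zero => intro u hu _; simp [show u = t from by omega]
    | succ m ih =>
      intro u hut hu
      have h1 := ih (u+1) (by omega) (by omega)
      have h2 : g (u+1) - g u ≤ q := by
        rw [hq]
        refine diff_mono g K hconv _ _ hu (by omega) (by omega)
      push_cast
      linarith
  intro j hj hjK
  rcases le_or_gt t j with h | h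
  · obtain ⟨m, rfl⟩ : ∃ m, j = t + m := ⟨j - t, by omega⟩
    have := hup m (by omega)
    push_cast
    push_cast at this
    nlinarith [this]
  · have := hdown (t - j) j (by omega) hj
    have hc : ((t - j : ℕ) : ℝ) = (t:ℝ) - j := by
      rw [Nat.cast_sub (by omega)]
    rw [hc] at this
    nlinarith [this]

end Envelope


/-- Let `K, N ≥ 1` and `1 ≤ s ≤ K` be integers, let `r` be real with
`1 ≤ r ≤ K`, `r₁ = ⌊r⌋`, `r₂ = ⌈r⌉`, and `α ∈ [0,1]` with `r = α r₁ + (1-α) r₂`.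
If `a 1, …, a K` are nonnegative with `∑ a j = N` and `∑ j a j = r N`, then
`∑ (a j / N) L_coded(j,s) ≥ α L_coded(r₁,s) + (1-α) L_coded(r₂,s)`. -/
theorem cdc_cascaded_converse_envelope
    (K N s : ℕ) (hK : 1 ≤ K) (hN : 1 ≤ N) (hs1 : 1 ≤ s) (hsK : s ≤ K)
    (r : ℝ) (hr1 : 1 ≤ r) (hrK : r ≤ K)
    (α : ℝ) (hα0 : 0 ≤ α) (hα1 : α ≤ 1)
    (hconv : r = α * (⌊r⌋ : ℝ) + (1 - α) * (⌈r⌉ : ℝ))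
    (a : ℕ → ℝ) (ha : ∀ j ∈ Finset.Icc 1 K, 0 ≤ a j)
    (hsum : ∑ j ∈ Finset.Icc 1 K, a j = N)
    (hrsum : ∑ j ∈ Finset.Icc 1 K, (j : ℝ) * a j = r * N) :
    ∑ j ∈ Finset.Icc 1 K, (a j / N) * LcodedConv K s j ≥
      α * LcodedConv K s ⌊r⌋.toNat + (1 - α) * LcodedConv K s ⌈r⌉.toNat := by
  have hN0 : (0:ℝ) < N := by exact_mod_cast hN
  set g : ℕ → ℝ := fun j => LcodedConv K s j with hgdef
  have hCK : (0:ℝ) < (Nat.choose K s : ℝ) := by exact_mod_cast Nat.choose_pos hsK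
  -- convexity of g
  have hconvex : ∀ v, 1 ≤ v → v + 2 ≤ K → 0 ≤ g v + g (v+2) - 2 * g (v+1) := by
    intro v hv hvK
    have e1 : g v = Tsum K s v / (Nat.choose K s : ℝ) :=
      Lcoded_eq K s v hs1 hsK hv (by omega)
    have e2 : g (v+2) = Tsum K s (v+2) / (Nat.choose K s : ℝ) :=
      Lcoded_eq K s (v+2) hs1 hsK (by omega) (by omega)
    have e3 : g (v+1) = Tsum K s (v+1) / (Nat.choose K s : ℝ) :=
      Lcoded_eq K s (v+1) hs1 hsK (by omega) (by omega)
    have := Tsum_convex K s (v+1) hs1 (by omega) (by omega)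
    simp only [Nat.add_sub_cancel] at this
    rw [e1, e2, e3, ← add_div,
      show 2 * (Tsum K s (v+1) / (Nat.choose K s : ℝ)) = (2 * Tsum K s (v+1)) / (Nat.choose K s : ℝ)
        from (mul_div_assoc 2 _ _).symm, ← sub_div]
    apply div_nonneg _ hCK.le
    rw [show v + 1 + 1 = v + 2 from by omega] at this
    linarith
  -- floor / ceil facts
  have hfl1 : (1:ℤ) ≤ ⌊r⌋ := by
    have : ((1:ℤ):ℝ) ≤ r := by exact_mod_cast hr1
    exact Int.le_floor.2 this
  have hflK : ⌊r⌋ ≤ (K:ℤ) := by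
    have := Int.floor_le_floor hrK
    simpa using this
  have hclK : ⌈r⌉ ≤ (K:ℤ) := Int.ceil_le.2 (by exact_mod_cast hrK)
  have hflcl : ⌊r⌋ ≤ ⌈r⌉ := Int.floor_le_ceil r
  have hclfl : ⌈r⌉ ≤ ⌊r⌋ + 1 := Int.ceil_le_floor_add_one r
  set t := ⌊r⌋.toNat with htdef
  have ht1 : 1 ≤ t := by omega
  have htK : t ≤ K := by omega
  have htr : (t:ℝ) = ((⌊r⌋ : ℤ) : ℝ) := by
    have h := Int.toNat_of_nonneg (show (0:ℤ) ≤ ⌊r⌋ by omega)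
    exact_mod_cast congrArg (fun z : ℤ => (z:ℝ)) h
  set q : ℝ := g (min t (K-1) + 1) - g (min t (K-1)) with hqdef
  have hline := line_bound g K hconvex t ht1 htK q hqdef
  have hstep : ∑ j ∈ Finset.Icc 1 K, (a j / N) * (g t + ((j:ℝ)-(t:ℝ))*q)
      ≤ ∑ j ∈ Finset.Icc 1 K, (a j / N) * g j := by
    apply Finset.sum_le_sum
    intro j hj
    have hj' := Finset.mem_Icc.1 hj
    exact mul_le_mul_of_nonneg_left (hline j hj'.1 hj'.2) (div_nonneg (ha j hj) hN0.le)
  have hval : ∑ j ∈ Finset.Icc 1 K, (a j / N) * (g t + ((j:ℝ)-(t:ℝ))*q)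
      = g t + (r - (t:ℝ)) * q := by
    have expand : ∀ j ∈ Finset.Icc 1 K, (a j / N) * (g t + ((j:ℝ)-(t:ℝ))*q)
        = (g t - (t:ℝ)*q) * (a j / N) + q * (((j:ℝ) * a j) / N) := by
      intro j _; ring
    rw [Finset.sum_congr rfl expand, Finset.sum_add_distrib, ← Finset.mul_sum, ← Finset.mul_sum]
    have s1 : ∑ j ∈ Finset.Icc 1 K, a j / (N:ℝ) = 1 := by
      rw [← Finset.sum_div, hsum, div_self hN0.ne']
    have s2 : ∑ j ∈ Finset.Icc 1 K, ((j:ℝ) * a j) / (N:ℝ) = r := by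
      rw [← Finset.sum_div, hrsum, mul_div_assoc, div_self hN0.ne', mul_one]
    rw [s1, s2]
    ring
  have hmain : g t + (r - (t:ℝ)) * q ≤ ∑ j ∈ Finset.Icc 1 K, (a j / N) * g j := by
    rw [← hval]; exact hstep
  have hfold : ∑ j ∈ Finset.Icc 1 K, (a j / N) * LcodedConv K s j
      = ∑ j ∈ Finset.Icc 1 K, (a j / N) * g j := rfl
  rcases (show ⌈r⌉ = ⌊r⌋ ∨ ⌈r⌉ = ⌊r⌋ + 1 from by omega) with hcase | hcase
  · -- r is an integer
    have hrt : r = (t:ℝ) := by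
      have h1 := Int.floor_le r
      have h2 := Int.le_ceil r
      rw [hcase] at h2
      rw [htr]; linarith
    have hRHS : α * LcodedConv K s ⌊r⌋.toNat + (1 - α) * LcodedConv K s ⌈r⌉.toNat = g t := by
      rw [hcase, ← htdef]
      show α * g t + (1 - α) * g t = g t
      ring
    rw [ge_iff_le, hRHS, hfold]
    have heq : g t + (r - (t:ℝ)) * q = g t := by rw [hrt]; ring
    exact (le_of_eq heq.symm).trans hmain
  · -- fractional case
    have ht2 : ⌈r⌉.toNat = t + 1 := by omega
    have htK1 : t + 1 ≤ K := by omega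
    have hmin : min t (K-1) = t := by omega
    have hq2 : q = g (t+1) - g t := by rw [hqdef, hmin]
    have hceilr : ((⌈r⌉ : ℤ) : ℝ) = ((⌊r⌋ : ℤ) : ℝ) + 1 := by
      rw [hcase]; push_cast; ring
    have hconv' : r = α * ((⌊r⌋:ℤ):ℝ) + (1 - α) * (((⌊r⌋:ℤ):ℝ) + 1) := by
      rw [← hceilr]; exact hconv
    have hαr : r - (t:ℝ) = 1 - α := by
      rw [htr]; linear_combination hconv'
    rw [ge_iff_le, ht2]
    have : α * g t + (1 - α) * g (t+1) = g t + (r - (t:ℝ)) * q := by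
      rw [hαr, hq2]; ring
    rw [hfold]
    show α * g t + (1 - α) * g (t+1) ≤ _
    rw [this]
    exact hmain
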